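/- The language L(⊡) is less expressive than the language L(⊞) on the class of symmetric bimodal models. Concretely: (i) for every φ ∈ L(⊡) there is ψ ∈ L(⊞) equivalent to φ on all bimodal models (namely ⊞φ ∧ ⊞¬φ for ⊡φ); and (ii) there exist two pointed symmetric bimodal models (M,s) and (M',s') such that M,s ⊨ ⊞p and M',s' ⊭ ⊞p, while for every φ ∈ L(⊡), M,s ⊨ φ iff M',s' ⊨ φ. -/

import Mathlib

/-- Formulas built from propositional variables by ¬, ∧, ⊡ (`gbox`) and ⊞ (`pbox`). -/
inductive Form : Type
  | var : ℕ → Form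
  | neg : Form → Form
  | conj : Form → Form → Form
  | gbox : Form → Form
  | pbox : Form → Form

/-- A bimodal model: a nonempty set of worlds, two accessibility relations and a valuation. -/
structure BiModel : Type 1 where
  S : Type
  ne : Nonempty S
  R1 : S → S → Prop
  R2 : S → S → Prop
  V : ℕ → Set S

/-- Truth of a formula at a world. ⊡φ: all R1-successors and R2-successors agree
on φ. ⊞φ: either φ holds at all R1-successors, or ¬φ holds at all R2-successors. -/
def sat (M : BiModel) : M.S → Form → Prop
  | s, .var n => s ∈ M.V n
  | s, .neg φ => ¬ sat M s φ
  | s, .conj φ ψ => sat M s φ ∧ sat M s ψ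
  | s, .gbox φ => ∀ t u, M.R1 s t → M.R2 s u → (sat M t φ ↔ sat M u φ)
  | s, .pbox φ => (∀ t, M.R1 s t → sat M t φ) ∨ (∀ u, M.R2 s u → ¬ sat M u φ)

/-- φ belongs to the fragment L(⊡) (no occurrence of ⊞). -/
def Form.noPBox : Form → Prop
  | .var _ => True
  | .neg φ => φ.noPBox
  | .conj φ ψ => φ.noPBox ∧ ψ.noPBox
  | .gbox φ => φ.noPBox
  | .pbox _ => False

/-- φ belongs to the fragment L(⊞) (no occurrence of ⊡). -/
def Form.noGBox : Form → Prop
  | .var _ => True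
  | .neg φ => φ.noGBox
  | .conj φ ψ => φ.noGBox ∧ ψ.noGBox
  | .gbox _ => False
  | .pbox φ => φ.noGBox

/-- A model is serial if both relations are serial. -/
def SerialM (M : BiModel) : Prop := (∀ s, ∃ t, M.R1 s t) ∧ (∀ s, ∃ t, M.R2 s t)
/-- A model is transitive if both relations are transitive. -/
def TransM (M : BiModel) : Prop := Transitive M.R1 ∧ Transitive M.R2
/-- A model is Euclidean if both relations are Euclidean. -/
def EuclM (M : BiModel) : Prop :=
  (∀ x y z : M.S, M.R1 x y → M.R1 x z → M.R1 y z) ∧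
  (∀ x y z : M.S, M.R2 x y → M.R2 x z → M.R2 y z)
/-- A model is symmetric if both relations are symmetric. -/
def SymmM (M : BiModel) : Prop := Symmetric M.R1 ∧ Symmetric M.R2
/-- A model is reflexive if both relations are reflexive. -/
def ReflM (M : BiModel) : Prop := Reflexive M.R1 ∧ Reflexive M.R2

/-- Translation of L(⊡) into L(⊞): ⊡φ becomes ⊞φ ∧ ⊞¬φ. -/
def trF : Form → Form
  | .var n => .var n
  | .neg φ => .neg (trF φ)
  | .conj φ ψ => .conj (trF φ) (trF ψ)
  | .gbox φ => .conj (.pbox (trF φ)) (.pbox (.neg (trF φ)))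
  | .pbox φ => .pbox (trF φ)

lemma trF_noGBox (φ : Form) (h : φ.noPBox) : (trF φ).noGBox := by
  induction φ with
  | var n => trivial
  | neg φ ih => exact ih h
  | conj φ ψ ih1 ih2 => exact ⟨ih1 h.1, ih2 h.2⟩
  | gbox φ ih => exact ⟨ih h, ih h⟩
  | pbox φ ih => exact absurd h not_false

lemma gbox_aux {α : Type} (R1 R2 : α → α → Prop) (A : α → Prop) (s : α) :
    (∀ t u, R1 s t → R2 s u → (A t ↔ A u)) ↔
      (((∀ t, R1 s t → A t) ∨ (∀ u, R2 s u → ¬ A u)) ∧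
       ((∀ t, R1 s t → ¬ A t) ∨ (∀ u, R2 s u → A u))) := by
  constructor
  · intro h
    constructor
    · by_cases h1 : ∀ t, R1 s t → A t
      · exact Or.inl h1
      · push_neg at h1
        obtain ⟨t, ht, hA⟩ := h1
        exact Or.inr fun u hu hAu => hA ((h t u ht hu).mpr hAu)
    · by_cases h1 : ∀ t, R1 s t → ¬ A t
      · exact Or.inl h1
      · push_neg at h1
        obtain ⟨t, ht, hA⟩ := h1
        exact Or.inr fun u hu => (h t u ht hu).mp hA
  · rintro ⟨h1, h2⟩ t u ht hu
    constructor
    · intro hA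
      rcases h2 with h | h
      · exact absurd hA (h t ht)
      · exact h u hu
    · intro hA
      rcases h1 with h | h
      · exact h t ht
      · exact absurd hA (h u hu)

lemma trF_sat (φ : Form) (h : φ.noPBox) (M : BiModel) (s : M.S) :
    sat M s φ ↔ sat M s (trF φ) := by
  induction φ generalizing s with
  | var n => exact Iff.rfl
  | neg φ ih => exact not_congr (ih h s)
  | conj φ ψ ih1 ih2 => exact and_congr (ih1 h.1 s) (ih2 h.2 s)
  | gbox φ ih =>
    have haux := gbox_aux M.R1 M.R2 (fun t => sat M t (trF φ)) s
    simp only [sat, trF, not_not]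
    rw [show (∀ t u, M.R1 s t → M.R2 s u → (sat M t φ ↔ sat M u φ)) ↔
        (∀ t u, M.R1 s t → M.R2 s u → (sat M t (trF φ) ↔ sat M u (trF φ))) from
      forall_congr' fun t => forall_congr' fun u => imp_congr_right fun _ =>
        imp_congr_right fun _ => iff_congr (ih h t) (ih h u)]
    exact haux
  | pbox φ ih => exact absurd h not_false

/-- First relation on `Fin 3`: 0 ↔ 1. -/
def Rel1 : Fin 3 → Fin 3 → Prop := fun x y => (x = 0 ∧ y = 1) ∨ (x = 1 ∧ y = 0)
/-- Second relation on `Fin 3`: 0 ↔ 2. -/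
def Rel2 : Fin 3 → Fin 3 → Prop := fun x y => (x = 0 ∧ y = 2) ∨ (x = 2 ∧ y = 0)

/-- Model where p holds only at world 1 (the R1-successor of 0). -/
def MA : BiModel := ⟨Fin 3, ⟨0⟩, Rel1, Rel2, fun n => {x | n = 0 ∧ x = 1}⟩
/-- Model where p holds only at world 2 (the R2-successor of 0). -/
def MB : BiModel := ⟨Fin 3, ⟨0⟩, Rel1, Rel2, fun n => {x | n = 0 ∧ x = 2}⟩

lemma key (φ : Form) (h : φ.noPBox) :
    (sat MA (0 : Fin 3) φ ↔ sat MB (0 : Fin 3) φ) ∧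
    (sat MA (1 : Fin 3) φ ↔ sat MB (2 : Fin 3) φ) ∧
    (sat MA (2 : Fin 3) φ ↔ sat MB (1 : Fin 3) φ) := by
  induction φ with
  | var n =>
    refine ⟨?_, ?_, ?_⟩ <;> simp [sat, MA, MB, Set.mem_setOf_eq] <;>
      (change (n = 0 ∧ (_ : Fin 3) = _) ↔ (n = 0 ∧ (_ : Fin 3) = _); simp)
  | neg φ ih =>
    obtain ⟨i0, i1, i2⟩ := ih h
    exact ⟨not_congr i0, not_congr i1, not_congr i2⟩
  | conj φ ψ ih1 ih2 =>
    obtain ⟨a0, a1, a2⟩ := ih1 h.1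
    obtain ⟨b0, b1, b2⟩ := ih2 h.2
    exact ⟨and_congr a0 b0, and_congr a1 b1, and_congr a2 b2⟩
  | gbox φ ih =>
    obtain ⟨i0, i1, i2⟩ := ih h
    refine ⟨?_, ?_, ?_⟩
    · constructor
      · intro hg t u ht hu
        have hmain : sat MA (1 : Fin 3) φ ↔ sat MA (2 : Fin 3) φ :=
          hg (1 : Fin 3) (2 : Fin 3) (Or.inl ⟨rfl, rfl⟩) (Or.inl ⟨rfl, rfl⟩)
        rcases ht with ⟨_, rfl⟩ | ⟨h01, _⟩
        · rcases hu with ⟨_, rfl⟩ | ⟨h02, _⟩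
          · exact (i2.symm.trans hmain.symm).trans i1
          · exact absurd h02 (by decide)
        · exact absurd h01 (by decide)
      · intro hg t u ht hu
        have hmain : sat MB (1 : Fin 3) φ ↔ sat MB (2 : Fin 3) φ :=
          hg (1 : Fin 3) (2 : Fin 3) (Or.inl ⟨rfl, rfl⟩) (Or.inl ⟨rfl, rfl⟩)
        rcases ht with ⟨_, rfl⟩ | ⟨h01, _⟩
        · rcases hu with ⟨_, rfl⟩ | ⟨h02, _⟩
          · exact (i1.trans hmain.symm).trans i2.symm
          · exact absurd h02 (by decide)
        · exact absurd h01 (by decide)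
    · constructor
      · intro _ t u ht _
        rcases ht with ⟨h20, _⟩ | ⟨h21, _⟩
        · exact absurd h20 (by decide)
        · exact absurd h21 (by decide)
      · intro _ t u _ hu
        rcases hu with ⟨h10, _⟩ | ⟨h12, _⟩
        · exact absurd h10 (by decide)
        · exact absurd h12 (by decide)
    · constructor
      · intro _ t u _ hu
        rcases hu with ⟨h10, _⟩ | ⟨h12, _⟩
        · exact absurd h10 (by decide)
        · exact absurd h12 (by decide)
      · intro _ t u ht _
        rcases ht with ⟨h20, _⟩ | ⟨h21, _⟩
        · exact absurd h20 (by decide)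
        · exact absurd h21 (by decide)
  | pbox φ ih => exact absurd h not_false

/-- L(⊡) is less expressive than L(⊞) on the class of symmetric bimodal models:
(i) every L(⊡)-formula has an L(⊞)-equivalent on all models; (ii) there are two
pointed symmetric models distinguished by ⊞p but not by any L(⊡)-formula. -/
theorem stmt4 :
  (∀ φ : Form, φ.noPBox →
      ∃ ψ : Form, ψ.noGBox ∧ ∀ (M : BiModel) (s : M.S), (sat M s φ ↔ sat M s ψ)) ∧
    (∃ (M M' : BiModel) (s : M.S) (s' : M'.S),
      SymmM M ∧ SymmM M' ∧
      sat M s (Form.pbox (Form.var 0)) ∧ ¬ sat M' s' (Form.pbox (Form.var 0)) ∧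
      ∀ φ : Form, φ.noPBox → (sat M s φ ↔ sat M' s' φ)) := by
  constructor
  · intro φ h
    exact ⟨trF φ, trF_noGBox φ h, fun M s => trF_sat φ h M s⟩
  · refine ⟨MA, MB, (0 : Fin 3), (0 : Fin 3), ?_, ?_, ?_, ?_, fun φ h => (key φ h).1⟩
    · constructor
      · intro x y hxy
        rcases hxy with ⟨rfl, rfl⟩ | ⟨rfl, rfl⟩
        · exact Or.inr ⟨rfl, rfl⟩
        · exact Or.inl ⟨rfl, rfl⟩
      · intro x y hxy
        rcases hxy with ⟨rfl, rfl⟩ | ⟨rfl, rfl⟩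
        · exact Or.inr ⟨rfl, rfl⟩
        · exact Or.inl ⟨rfl, rfl⟩
    · constructor
      · intro x y hxy
        rcases hxy with ⟨rfl, rfl⟩ | ⟨rfl, rfl⟩
        · exact Or.inr ⟨rfl, rfl⟩
        · exact Or.inl ⟨rfl, rfl⟩
      · intro x y hxy
        rcases hxy with ⟨rfl, rfl⟩ | ⟨rfl, rfl⟩
        · exact Or.inr ⟨rfl, rfl⟩
        · exact Or.inl ⟨rfl, rfl⟩
    · -- sat MA 0 ⊞p : all R1-successors of 0 (just 1) satisfy p
      refine Or.inl ?_
      intro t ht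
      rcases ht with ⟨_, rfl⟩ | ⟨h01, _⟩
      · exact ⟨rfl, rfl⟩
      · exact absurd h01 (by decide)
    · -- ¬ sat MB 0 ⊞p
      rintro (h1 | h2)
      · have := h1 (1 : Fin 3) (Or.inl ⟨rfl, rfl⟩)
        exact absurd this.2 (by decide)
      · exact h2 (2 : Fin 3) (Or.inl ⟨rfl, rfl⟩) ⟨rfl, rfl⟩
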